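/- Let N, l be positive integers with l < N, let â be the mask of the pseudo spline of type II with order (N,l) and φ̂(ξ) = ∏_{k=1}^{∞} â(2^{-k}ξ). Let K ⊂ [−π,π] be a bounded set and ξ₀ a point of K maximizing |ξ|. Then there exists a constant C₄ > 0 (explicitly C₄ = ∏_{k=1}^{k₀} |â(2^{-k}ξ₀)| · exp(−C₁ 2^{-k₀+1} |ξ₀|^{2l+2}) for suitable k₀) such that |φ̂(ξ)| ≥ C₄ for all ξ ∈ K. -/

import Mathlib

open Real Finset

noncomputable def pseudoMaskII (N l : ℕ) (ξ : ℝ) : ℝ :=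
  Real.cos (ξ / 2) ^ (2 * N) *
    ∑ j ∈ Finset.range (l + 1), ((N - 1 + j).choose j : ℝ) * Real.sin (ξ / 2) ^ (2 * j)

noncomputable def pseudoSplineFT (N l : ℕ) (ξ : ℝ) : ℝ :=
  ∏' j : ℕ, pseudoMaskII N l (ξ / 2 ^ (j + 1))

/-! ### Auxiliary definitions -/

noncomputable def psS (N l : ℕ) (y : ℝ) : ℝ :=
  ∑ j ∈ Finset.range (l + 1), ((N - 1 + j).choose j : ℝ) * y ^ j

noncomputable def psG (N l : ℕ) (y : ℝ) : ℝ := (1 - y) ^ N * psS N l y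

/-! ### Generic infinite product lemmas -/

lemma multipliable_of_le_one {f : ℕ → ℝ} (h0 : ∀ n, 0 ≤ f n) (h1 : ∀ n, f n ≤ 1) :
    Multipliable f := by
  have hanti : Antitone (fun s : Finset ℕ => ∏ i ∈ s, f i) := by
    intro s t hst
    simp only
    rw [← Finset.prod_sdiff hst]
    have h2 : ∏ i ∈ t \ s, f i ≤ 1 := Finset.prod_le_one (fun i _ => h0 i) (fun i _ => h1 i)
    have h3 : 0 ≤ ∏ i ∈ s, f i := Finset.prod_nonneg fun i _ => h0 i
    nlinarith [Finset.prod_nonneg (fun i (_ : i ∈ t \ s) => h0 i)]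
  have hbdd : BddBelow (Set.range fun s : Finset ℕ => ∏ i ∈ s, f i) := by
    refine ⟨0, ?_⟩
    rintro x ⟨s, rfl⟩
    exact Finset.prod_nonneg fun i _ => h0 i
  exact ⟨_, tendsto_atTop_ciInf hanti hbdd⟩

lemma hasProd_shift {f : ℕ → ℝ} {a : ℝ} (k : ℕ) (ha : HasProd (fun n => f (n + k)) a) :
    HasProd f ((∏ i ∈ Finset.range k, f i) * a) := by
  set F : ℕ → ℝ := fun n => if n < k then 1 else f n with hF
  set G : ℕ → ℝ := fun n => if n < k then f n else 1 with hG
  have hFG : f = fun n => G n * F n := by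
    funext n
    by_cases h : n < k <;> simp [hF, hG, h]
  have hGprod : HasProd G (∏ i ∈ Finset.range k, f i) := by
    have h1 : ∀ n ∉ Finset.range k, G n = 1 := by
      intro n hn
      simp only [Finset.mem_range, not_lt] at hn
      simp [hG, Nat.not_lt.mpr hn]
    have : HasProd G (∏ b ∈ Finset.range k, G b) := hasProd_prod_of_ne_finset_one h1
    convert this using 1
    refine (Finset.prod_congr rfl fun i hi => ?_)
    simp only [Finset.mem_range] at hi
    simp [hG, hi]
  have hFprod : HasProd F a := by
    have hinj : Function.Injective (fun n : ℕ => n + k) := fun a b h => by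
      simpa using h
    have hout : ∀ n, n ∉ Set.range (fun n : ℕ => n + k) → F n = 1 := by
      intro n hn
      have : n < k := by
        by_contra h
        push_neg at h
        exact hn ⟨n - k, by simpa using Nat.sub_add_cancel h⟩
      simp [hF, this]
    rw [← Function.Injective.hasProd_iff hinj hout]
    convert ha using 1
    funext n
    simp only [Function.comp]
    have : ¬ (n + k < k) := by omega
    simp [hF, this]
  have h := hGprod.mul hFprod
  rw [← hFG] at h
  exact h

lemma tprod_ge_exp {f u : ℕ → ℝ} (hf : Multipliable f) (hu : Summable u)
    (hu0 : ∀ n, 0 ≤ u n) (hb : ∀ n, Real.exp (-u n) ≤ f n) :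
    Real.exp (-(∑' n, u n)) ≤ ∏' n, f n := by
  refine ge_of_tendsto' hf.hasProd fun s => ?_
  have h1 : Real.exp (-(∑' n, u n)) ≤ Real.exp (-(∑ i ∈ s, u i)) := by
    apply Real.exp_le_exp.2
    have := hu.sum_le_tsum s (fun i _ => hu0 i)
    linarith
  refine h1.trans ?_
  have h2 : Real.exp (-(∑ i ∈ s, u i)) = ∏ i ∈ s, Real.exp (-u i) := by
    rw [← Real.exp_sum]
    congr 1
    rw [Finset.sum_neg_distrib]
  rw [h2]
  exact Finset.prod_le_prod (fun i _ => (Real.exp_pos _).le) (fun i _ => hb i)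


/-! ### Combinatorial facts -/

lemma aux_choose (N j : ℕ) (hN : 1 ≤ N) :
    ((j : ℝ) + 1) * ((N - 1 + (j + 1)).choose (j + 1) : ℝ)
      = ((N : ℝ) + j) * ((N - 1 + j).choose j : ℝ) := by
  have h3 : N - 1 + j + 1 = N + j := by omega
  have h4 : N - 1 + (j + 1) = N + j := by omega
  have h := Nat.add_one_mul_choose_eq (N - 1 + j) j
  rw [h3] at h
  -- h : (N + j) * (N - 1 + j).choose j = (N + j).choose (j + 1) * (j + 1)
  rw [h4]
  have : ((N + j) * (N - 1 + j).choose j : ℝ) = (((N + j).choose (j + 1) * (j + 1) : ℕ) : ℝ) := by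
    exact_mod_cast congrArg (Nat.cast : ℕ → ℝ) h
  push_cast at this ⊢
  linarith [this]

lemma aux_choose2 (N l : ℕ) (hN : 1 ≤ N) :
    ((l : ℝ) + 1) * (((N + l).choose (l + 1)) : ℝ)
      = ((N : ℝ) + l) * ((N - 1 + l).choose l : ℝ) := by
  have h3 : N - 1 + l + 1 = N + l := by omega
  have h := Nat.add_one_mul_choose_eq (N - 1 + l) l
  rw [h3] at h
  have : ((N + l) * (N - 1 + l).choose l : ℝ) = (((N + l).choose (l + 1) * (l + 1) : ℕ) : ℝ) := by
    exact_mod_cast congrArg (Nat.cast : ℕ → ℝ) h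
  push_cast at this ⊢
  linarith [this]

/-! ### Derivative computations -/

lemma psS_hasDeriv (N l : ℕ) (hN : 1 ≤ N) (y : ℝ) :
    HasDerivAt (psS N l)
      (∑ j ∈ Finset.range l, ((N : ℝ) + j) * ((N - 1 + j).choose j : ℝ) * y ^ j) y := by
  have h : HasDerivAt (psS N l)
      (∑ j ∈ Finset.range (l + 1), ((N - 1 + j).choose j : ℝ) * ((j : ℝ) * y ^ (j - 1))) y := by
    show HasDerivAt (fun y : ℝ => ∑ j ∈ Finset.range (l + 1), ((N - 1 + j).choose j : ℝ) * y ^ j) _ y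
    apply HasDerivAt.fun_sum
    intro j hj
    exact (hasDerivAt_pow j y).const_mul _
  convert h using 1
  rw [Finset.sum_range_succ']
  simp only [Nat.cast_zero, zero_mul, mul_zero, add_zero]
  refine Finset.sum_congr rfl fun j hj => ?_
  have h2 : j + 1 - 1 = j := rfl
  rw [h2]
  push_cast
  linear_combination (-(y ^ j)) * aux_choose N j hN

lemma key_identity (N l : ℕ) (hN : 1 ≤ N) (y : ℝ) :
    (1 - y) * (∑ j ∈ Finset.range l, ((N : ℝ) + j) * ((N - 1 + j).choose j : ℝ) * y ^ j)
      = N * psS N l y - ((N : ℝ) + l) * ((N - 1 + l).choose l : ℝ) * y ^ l := by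
  have hT : (∑ j ∈ Finset.range (l + 1), ((N : ℝ) + j) * ((N - 1 + j).choose j : ℝ) * y ^ j)
      = (∑ j ∈ Finset.range l, ((N : ℝ) + j) * ((N - 1 + j).choose j : ℝ) * y ^ j)
        + ((N : ℝ) + l) * ((N - 1 + l).choose l : ℝ) * y ^ l := Finset.sum_range_succ _ _
  have hyT : y * (∑ j ∈ Finset.range l, ((N : ℝ) + j) * ((N - 1 + j).choose j : ℝ) * y ^ j)
      = ∑ j ∈ Finset.range (l + 1), (j : ℝ) * ((N - 1 + j).choose j : ℝ) * y ^ j := by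
    rw [Finset.sum_range_succ', Finset.mul_sum]
    simp only [Nat.cast_zero, zero_mul, add_zero]
    refine Finset.sum_congr rfl fun j hj => ?_
    push_cast
    linear_combination (-(y ^ (j + 1))) * aux_choose N j hN
  have hS : (N : ℝ) * psS N l y
      = ∑ j ∈ Finset.range (l + 1), (N : ℝ) * (((N - 1 + j).choose j : ℝ) * y ^ j) := by
    rw [psS, Finset.mul_sum]
  have key : (∑ j ∈ Finset.range (l + 1), ((N : ℝ) + j) * ((N - 1 + j).choose j : ℝ) * y ^ j)
      - (∑ j ∈ Finset.range (l + 1), (j : ℝ) * ((N - 1 + j).choose j : ℝ) * y ^ j)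
      = (N : ℝ) * psS N l y := by
    rw [hS, ← Finset.sum_sub_distrib]
    exact Finset.sum_congr rfl fun j _ => by ring
  linear_combination key - hT - hyT

lemma psG_hasDeriv (N l : ℕ) (hN : 1 ≤ N) (y : ℝ) :
    HasDerivAt (psG N l)
      (-(((N : ℝ) + l) * ((N - 1 + l).choose l : ℝ)) * (y ^ l * (1 - y) ^ (N - 1))) y := by
  have h0 : HasDerivAt (fun y : ℝ => 1 - y) (-1) y := by
    simpa using (hasDerivAt_id y).const_sub 1
  have h1 : HasDerivAt (fun y : ℝ => (1 - y) ^ N) (-((N : ℝ) * (1 - y) ^ (N - 1))) y := by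
    have := (hasDerivAt_pow N (1 - y)).comp y h0
    refine this.congr_deriv ?_
    ring
  have h := h1.mul (psS_hasDeriv N l hN y)
  have hGdef : psG N l = fun y => (1 - y) ^ N * psS N l y := rfl
  rw [hGdef]
  refine h.congr_deriv (Eq.symm ?_)
  have hpow : (1 - y) ^ N = (1 - y) ^ (N - 1) * (1 - y) := by
    conv_lhs => rw [show N = (N - 1) + 1 by omega]
    rw [pow_succ]
  rw [hpow]
  linear_combination (-((1 - y) ^ (N - 1))) * key_identity N l hN y

/-! ### Properties of psG -/

lemma psG_zero (N l : ℕ) : psG N l 0 = 1 := by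
  have h : psS N l 0 = 1 := by
    show (∑ j ∈ Finset.range (l + 1), ((N - 1 + j).choose j : ℝ) * (0:ℝ) ^ j) = 1
    rw [Finset.sum_eq_single 0]
    · simp
    · intro j hj hj0
      simp [zero_pow hj0]
    · simp
  simp [psG, h]

lemma psS_ge_one (N l : ℕ) {y : ℝ} (hy : 0 ≤ y) : 1 ≤ psS N l y := by
  have h := Finset.single_le_sum
    (f := fun j => ((N - 1 + j).choose j : ℝ) * y ^ j)
    (fun j _ => mul_nonneg (Nat.cast_nonneg _) (pow_nonneg hy j))
    (Finset.mem_range.2 (Nat.succ_pos l))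
  simpa [psS] using h

lemma psG_antitone (N l : ℕ) (hN : 1 ≤ N) : AntitoneOn (psG N l) (Set.Icc 0 1) := by
  apply antitoneOn_of_deriv_nonpos (convex_Icc 0 1)
  · exact fun y _ => (psG_hasDeriv N l hN y).differentiableAt.continuousAt.continuousWithinAt
  · intro y hy
    exact (psG_hasDeriv N l hN y).differentiableAt.differentiableWithinAt
  · intro y hy
    rw [interior_Icc] at hy
    rw [(psG_hasDeriv N l hN y).deriv]
    have h1 : (0:ℝ) ≤ y ^ l * (1 - y) ^ (N - 1) :=
      mul_nonneg (pow_nonneg hy.1.le _) (pow_nonneg (by linarith [hy.2]) _)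
    have h2 : (0:ℝ) ≤ ((N : ℝ) + l) * ((N - 1 + l).choose l : ℝ) := by positivity
    nlinarith

lemma psG_ge (N l : ℕ) (hN : 1 ≤ N) {y : ℝ} (hy0 : 0 ≤ y) (hy1 : y ≤ 1) :
    1 - (((N + l).choose (l + 1)) : ℝ) * y ^ (l + 1) ≤ psG N l y := by
  set C2 : ℝ := (((N + l).choose (l + 1)) : ℝ) with hC2
  have hF : ∀ x : ℝ, HasDerivAt (fun x => psG N l x + C2 * x ^ (l + 1))
      (-(((N : ℝ) + l) * ((N - 1 + l).choose l : ℝ)) * (x ^ l * (1 - x) ^ (N - 1))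
        + C2 * (((l : ℝ) + 1) * x ^ l)) x := by
    intro x
    have h2 : HasDerivAt (fun x : ℝ => C2 * x ^ (l + 1)) (C2 * (((l : ℝ) + 1) * x ^ l)) x := by
      have := (hasDerivAt_pow (l + 1) x).const_mul C2
      have h3 : l + 1 - 1 = l := rfl
      rw [h3] at this
      refine this.congr_deriv ?_
      push_cast
      ring
    exact (psG_hasDeriv N l hN x).add h2
  have hmono : MonotoneOn (fun x => psG N l x + C2 * x ^ (l + 1)) (Set.Icc 0 1) := by
    apply monotoneOn_of_deriv_nonneg (convex_Icc 0 1)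
    · exact fun x _ => (hF x).differentiableAt.continuousAt.continuousWithinAt
    · exact fun x hx => (hF x).differentiableAt.differentiableWithinAt
    · intro x hx
      rw [interior_Icc] at hx
      rw [(hF x).deriv]
      have hkey := aux_choose2 N l hN
      have e1 : C2 * (((l : ℝ) + 1) * x ^ l)
          = (((N : ℝ) + l) * ((N - 1 + l).choose l : ℝ)) * x ^ l := by
        linear_combination (x ^ l) * hkey
      rw [e1]
      have hp1 : (1 - x) ^ (N - 1) ≤ 1 := pow_le_one₀ (by linarith [hx.2]) (by linarith [hx.1])
      have hxl : (0:ℝ) ≤ x ^ l := pow_nonneg hx.1.le _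
      have hA : (0:ℝ) ≤ ((N : ℝ) + l) * ((N - 1 + l).choose l : ℝ) := by positivity
      nlinarith [mul_nonneg (mul_nonneg hA hxl) (sub_nonneg.2 hp1)]
  have h := hmono (Set.mem_Icc.2 ⟨le_rfl, zero_le_one⟩) (Set.mem_Icc.2 ⟨hy0, hy1⟩) hy0
  simp only [psG_zero, zero_pow (Nat.succ_ne_zero l), mul_zero, add_zero] at h
  linarith

/-! ### Properties of the mask -/

lemma mask_eq (N l : ℕ) (ξ : ℝ) : pseudoMaskII N l ξ = psG N l (Real.sin (ξ / 2) ^ 2) := by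
  unfold pseudoMaskII psG psS
  rw [pow_mul, Real.cos_sq']
  congr 1
  exact Finset.sum_congr rfl fun j hj => by rw [pow_mul]

lemma mask_pos (N l : ℕ) {ξ : ℝ} (h : |ξ| < π) : 0 < pseudoMaskII N l ξ := by
  rw [mask_eq]
  have hcos : 0 < Real.cos (ξ / 2) := by
    apply Real.cos_pos_of_mem_Ioo
    constructor
    · have := abs_lt.1 h
      linarith [this.1]
    · have := abs_lt.1 h
      linarith [this.2]
  have h1 : 0 < 1 - Real.sin (ξ / 2) ^ 2 := by
    rw [← Real.cos_sq']
    positivity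
  have h2 := psS_ge_one N l (sq_nonneg (Real.sin (ξ / 2)))
  unfold psG
  have := pow_pos h1 N
  nlinarith

lemma mask_le_one (N l : ℕ) (hN : 1 ≤ N) (ξ : ℝ) : pseudoMaskII N l ξ ≤ 1 := by
  rw [mask_eq]
  have h := psG_antitone N l hN (Set.mem_Icc.2 ⟨le_rfl, zero_le_one⟩)
    (Set.mem_Icc.2 ⟨sq_nonneg (Real.sin (ξ / 2)), Real.sin_sq_le_one (ξ / 2)⟩)
    (sq_nonneg (Real.sin (ξ / 2)))
  rw [psG_zero] at h
  exact h

lemma sin_half_sq_abs (x : ℝ) : Real.sin (x / 2) ^ 2 = Real.sin (|x| / 2) ^ 2 := by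
  rcases abs_cases x with ⟨h, _⟩ | ⟨h, _⟩
  · rw [h]
  · rw [h, neg_div, Real.sin_neg, neg_sq]

lemma mask_mono (N l : ℕ) (hN : 1 ≤ N) {ξ ζ : ℝ} (h1 : |ξ| ≤ |ζ|) (h2 : |ζ| ≤ π) :
    pseudoMaskII N l ζ ≤ pseudoMaskII N l ξ := by
  rw [mask_eq, mask_eq, sin_half_sq_abs ζ, sin_half_sq_abs ξ]
  have hξ2 : |ξ| / 2 ∈ Set.Icc (-(π / 2)) (π / 2) := by
    constructor
    · have := abs_nonneg ξ
      have := Real.pi_pos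
      linarith
    · linarith [h1.trans h2]
  have hζ2 : |ζ| / 2 ∈ Set.Icc (-(π / 2)) (π / 2) := by
    constructor
    · have := abs_nonneg ζ
      have := Real.pi_pos
      linarith
    · linarith
  have hsin : Real.sin (|ξ| / 2) ≤ Real.sin (|ζ| / 2) :=
    Real.strictMonoOn_sin.monotoneOn hξ2 hζ2 (by linarith)
  have hsin0 : 0 ≤ Real.sin (|ξ| / 2) := by
    apply Real.sin_nonneg_of_nonneg_of_le_pi
    · positivity
    · have := Real.pi_pos
      linarith [h1.trans h2]
  have hsq : Real.sin (|ξ| / 2) ^ 2 ≤ Real.sin (|ζ| / 2) ^ 2 := by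
    apply pow_le_pow_left₀ hsin0 hsin
  apply psG_antitone N l hN
  · exact Set.mem_Icc.2 ⟨sq_nonneg _, Real.sin_sq_le_one _⟩
  · exact Set.mem_Icc.2 ⟨sq_nonneg _, Real.sin_sq_le_one _⟩
  · exact hsq

lemma mask_ge (N l : ℕ) (hN : 1 ≤ N) (ξ : ℝ) :
    1 - (∑ j ∈ Finset.Icc (l + 1) (N + l), ((N + l).choose j : ℝ)) / 2 ^ (2 * l + 2)
        * |ξ| ^ (2 * l + 2) ≤ pseudoMaskII N l ξ := by
  rw [mask_eq]
  set y := Real.sin (ξ / 2) ^ 2 with hy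
  have hy0 : 0 ≤ y := sq_nonneg _
  have hy1 : y ≤ 1 := Real.sin_sq_le_one _
  refine le_trans ?_ (psG_ge N l hN hy0 hy1)
  have hyx : y ≤ (ξ / 2) ^ 2 := Real.sin_sq_le_sq
  have h2 : y ^ (l + 1) ≤ ((ξ / 2) ^ 2) ^ (l + 1) := pow_le_pow_left₀ hy0 hyx _
  have h3 : ((ξ / 2) ^ 2) ^ (l + 1) = |ξ| ^ (2 * l + 2) / 2 ^ (2 * l + 2) := by
    rw [show 2 * l + 2 = 2 * (l + 1) by ring, pow_mul, pow_mul, sq_abs, div_pow, div_pow]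
  have h4 : (((N + l).choose (l + 1)) : ℝ)
      ≤ ∑ j ∈ Finset.Icc (l + 1) (N + l), ((N + l).choose j : ℝ) := by
    apply Finset.single_le_sum (f := fun j => ((N + l).choose j : ℝ))
      (fun j _ => Nat.cast_nonneg _)
    exact Finset.mem_Icc.2 ⟨le_rfl, by omega⟩
  have h5 : (((N + l).choose (l + 1)) : ℝ) * y ^ (l + 1)
      ≤ (∑ j ∈ Finset.Icc (l + 1) (N + l), ((N + l).choose j : ℝ))
        * (|ξ| ^ (2 * l + 2) / 2 ^ (2 * l + 2)) := by
    apply mul_le_mul h4 (h2.trans_eq h3) (pow_nonneg hy0 _)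
    positivity
  have h6 : (∑ j ∈ Finset.Icc (l + 1) (N + l), ((N + l).choose j : ℝ)) / 2 ^ (2 * l + 2)
      * |ξ| ^ (2 * l + 2)
      = (∑ j ∈ Finset.Icc (l + 1) (N + l), ((N + l).choose j : ℝ))
        * (|ξ| ^ (2 * l + 2) / 2 ^ (2 * l + 2)) := by ring
  linarith

lemma exp_neg_two_mul_le {x : ℝ} (h0 : 0 ≤ x) (h : x ≤ 1 / 2) :
    Real.exp (-(2 * x)) ≤ 1 - x := by
  have h1 := Real.add_one_le_exp (2 * x)
  have h2 : Real.exp (-(2 * x)) * Real.exp (2 * x) = 1 := by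
    rw [← Real.exp_add]; simp
  have h3 : (0:ℝ) < Real.exp (-(2 * x)) := Real.exp_pos _
  nlinarith [Real.exp_pos (2 * x), mul_nonneg (by linarith : (0:ℝ) ≤ 1 - x)
    (by linarith : (0:ℝ) ≤ Real.exp (2 * x) - (2 * x + 1))]

theorem pseudo_spline_FT_lower_bound (N l : ℕ) (hl : 0 < l) (hlN : l < N)
    (K : Set ℝ) (hK : K ⊆ Set.Icc (-π) π) (ξ₀ : ℝ) (hξ₀ : ξ₀ ∈ K)
    (hmax : ∀ ξ ∈ K, |ξ| ≤ |ξ₀|) :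
    ∃ k₀ : ℕ, 0 < k₀ ∧
      (0 < (∏ k ∈ Finset.Icc 1 k₀, |pseudoMaskII N l (ξ₀ / 2 ^ k)|) *
          Real.exp (-((∑ j ∈ Finset.Icc (l + 1) (N + l), ((N + l).choose j : ℝ)) / 2 ^ (2 * l + 2)) *
            2 ^ (-(k₀ : ℝ) + 1) * |ξ₀| ^ (2 * l + 2))) ∧
      ∀ ξ ∈ K, |pseudoSplineFT N l ξ| ≥
        (∏ k ∈ Finset.Icc 1 k₀, |pseudoMaskII N l (ξ₀ / 2 ^ k)|) *
          Real.exp (-((∑ j ∈ Finset.Icc (l + 1) (N + l), ((N + l).choose j : ℝ)) / 2 ^ (2 * l + 2)) *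
            2 ^ (-(k₀ : ℝ) + 1) * |ξ₀| ^ (2 * l + 2)) := by
  have hN : 1 ≤ N := by omega
  have hπ : (0:ℝ) < π := Real.pi_pos
  set S₁ : ℝ := ∑ j ∈ Finset.Icc (l + 1) (N + l), ((N + l).choose j : ℝ) with hS₁def
  have hS₁ : 0 < S₁ := by
    apply Finset.sum_pos
    · intro j hj
      rw [Finset.mem_Icc] at hj
      exact_mod_cast Nat.choose_pos hj.2
    · exact ⟨l + 1, Finset.mem_Icc.2 ⟨le_rfl, by omega⟩⟩
  set C₁ : ℝ := S₁ / 2 ^ (2 * l + 2) with hC₁def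
  have hC₁ : 0 < C₁ := by rw [hC₁def]; positivity
  have hC₁nn : 0 ≤ C₁ := hC₁.le
  obtain ⟨n, hn⟩ := exists_nat_ge (2 * C₁ * π ^ (2 * l + 2))
  have hb2 : ∀ m : ℕ, (0:ℝ) < 2 ^ m := fun m => pow_pos two_pos m
  refine ⟨n + 1, Nat.succ_pos n, ?_, ?_⟩
  · apply mul_pos _ (Real.exp_pos _)
    apply Finset.prod_pos
    intro k hk
    rw [Finset.mem_Icc] at hk
    apply abs_pos.2
    apply ne_of_gt
    apply mask_pos N l
    have hξ₀π : |ξ₀| ≤ π := abs_le.2 ⟨(hK hξ₀).1, (hK hξ₀).2⟩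
    rw [abs_div, abs_of_pos (hb2 k)]
    have h2 : (2:ℝ) ≤ 2 ^ k := by
      calc (2:ℝ) = 2 ^ 1 := (pow_one 2).symm
      _ ≤ 2 ^ k := pow_le_pow_right₀ one_le_two hk.1
    calc |ξ₀| / 2 ^ k ≤ π / 2 := div_le_div₀ hπ.le hξ₀π two_pos h2
    _ < π := by linarith
  set k₀ := n + 1 with hk₀def
  have h2k : 2 * C₁ * π ^ (2 * l + 2) ≤ 2 ^ k₀ := by
    refine hn.trans ?_
    have h := Nat.lt_two_pow_self (n := n)
    calc (n:ℝ) ≤ ((2 ^ n : ℕ) : ℝ) := by exact_mod_cast h.le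
    _ ≤ 2 ^ k₀ := by
        rw [hk₀def]
        push_cast
        rw [pow_succ]
        nlinarith [hb2 n]
  intro ξ hξK
  have hξπ : |ξ| ≤ π := abs_le.2 ⟨(hK hξK).1, (hK hξK).2⟩
  have hξ₀π : |ξ₀| ≤ π := abs_le.2 ⟨(hK hξ₀).1, (hK hξ₀).2⟩
  have hξle : |ξ| ≤ |ξ₀| := hmax ξ hξK
  have hargs : ∀ (ζ : ℝ), |ζ| ≤ π → ∀ k : ℕ, 1 ≤ k → |ζ / 2 ^ k| < π := by
    intro ζ hζ k hk
    rw [abs_div, abs_of_pos (hb2 k)]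
    have h2 : (2:ℝ) ≤ 2 ^ k := by
      calc (2:ℝ) = 2 ^ 1 := (pow_one 2).symm
      _ ≤ 2 ^ k := pow_le_pow_right₀ one_le_two hk
    calc |ζ| / 2 ^ k ≤ π / 2 := div_le_div₀ hπ.le hζ two_pos h2
    _ < π := by linarith
  set f : ℕ → ℝ := fun j => pseudoMaskII N l (ξ / 2 ^ (j + 1)) with hfdef
  have hf0 : ∀ j, 0 < f j := fun j => mask_pos N l (hargs ξ hξπ (j + 1) (by omega))
  have hf1 : ∀ j, f j ≤ 1 := fun j => mask_le_one N l hN _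
  have hMg : Multipliable (fun j => f (j + k₀)) :=
    multipliable_of_le_one (fun j => (hf0 _).le) (fun j => hf1 _)
  have hsplit : (∏' j, f j) = (∏ i ∈ Finset.range k₀, f i) * ∏' j, f (j + k₀) :=
    (hasProd_shift k₀ hMg.hasProd).tprod_eq
  -- head estimate
  have hhead : (∏ k ∈ Finset.Icc 1 k₀, |pseudoMaskII N l (ξ₀ / 2 ^ k)|)
      ≤ ∏ i ∈ Finset.range k₀, f i := by
    rw [← Finset.Ico_add_one_right_eq_Icc, Finset.prod_Ico_eq_prod_range]
    have hred : k₀ + 1 - 1 = k₀ := rfl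
    rw [hred]
    apply Finset.prod_le_prod (fun i _ => abs_nonneg _)
    intro i _
    have hpos := mask_pos N l (hargs ξ₀ hξ₀π (1 + i) (by omega))
    rw [abs_of_pos hpos]
    have h1i : (1 : ℕ) + i = i + 1 := by omega
    rw [h1i]
    apply mask_mono N l hN
    · rw [abs_div, abs_div, abs_of_pos (hb2 (i + 1))]
      gcongr
    · exact (hargs ξ₀ hξ₀π (i + 1) (by omega)).le
  have hheadnn : (0:ℝ) ≤ ∏ k ∈ Finset.Icc 1 k₀, |pseudoMaskII N l (ξ₀ / 2 ^ k)| :=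
    Finset.prod_nonneg fun k _ => abs_nonneg _
  -- tail estimate
  set q : ℝ := ((2:ℝ) ^ (2 * l + 2))⁻¹ with hqdef
  have hq0 : 0 ≤ q := by rw [hqdef]; positivity
  have hq4 : q ≤ 1 / 4 := by
    have h4 : (4:ℝ) ≤ 2 ^ (2 * l + 2) := by
      calc (4:ℝ) = 2 ^ 2 := by norm_num
      _ ≤ 2 ^ (2 * l + 2) := pow_le_pow_right₀ one_le_two (by omega)
    rw [hqdef, show (1:ℝ) / 4 = ((4:ℝ))⁻¹ by norm_num]
    exact inv_anti₀ (by norm_num) h4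
  have hq1 : q < 1 := lt_of_le_of_lt hq4 (by norm_num)
  set c : ℝ := 2 * C₁ * |ξ| ^ (2 * l + 2) * q ^ (k₀ + 1) with hcdef
  have hcnn : 0 ≤ c := by
    rw [hcdef]
    apply mul_nonneg (mul_nonneg (mul_nonneg (by norm_num) hC₁nn)
      (pow_nonneg (abs_nonneg _) _)) (pow_nonneg hq0 _)
  set u : ℕ → ℝ := fun j => c * q ^ j with hudef
  have hu : Summable u := (summable_geometric_of_lt_one hq0 hq1).mul_left c
  have hu0 : ∀ j, 0 ≤ u j := fun j => mul_nonneg hcnn (pow_nonneg hq0 _)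
  have habs : ∀ j : ℕ, |ξ / 2 ^ (j + k₀ + 1)| ^ (2 * l + 2)
      = |ξ| ^ (2 * l + 2) * q ^ (j + k₀ + 1) := by
    intro j
    rw [abs_div, abs_of_pos (hb2 (j + k₀ + 1)), div_pow, pow_right_comm, div_eq_mul_inv,
      hqdef, ← inv_pow]
  have hb : ∀ j : ℕ, Real.exp (-u j) ≤ f (j + k₀) := by
    intro j
    have harg : f (j + k₀) = pseudoMaskII N l (ξ / 2 ^ (j + k₀ + 1)) := rfl
    set x : ℝ := C₁ * |ξ / 2 ^ (j + k₀ + 1)| ^ (2 * l + 2) with hxdef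
    have hx0 : 0 ≤ x := mul_nonneg hC₁nn (pow_nonneg (abs_nonneg _) _)
    have hux : u j = 2 * x := by
      rw [hudef, hxdef, habs j, hcdef]
      rw [show j + k₀ + 1 = j + (k₀ + 1) by omega, pow_add]
      ring
    have hxhalf : x ≤ 1 / 2 := by
      have h1 : |ξ / 2 ^ (j + k₀ + 1)| ≤ π / 2 ^ (k₀ + 1) := by
        rw [abs_div, abs_of_pos (hb2 (j + k₀ + 1))]
        exact div_le_div₀ hπ.le hξπ (hb2 (k₀ + 1))
          (pow_le_pow_right₀ one_le_two (by omega))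
      have hone : (1:ℝ) ≤ 2 ^ (k₀ + 1) := by
        calc (1:ℝ) ≤ 2 := one_le_two
        _ ≤ 2 ^ (k₀ + 1) := by
            calc (2:ℝ) = 2 ^ 1 := (pow_one 2).symm
            _ ≤ 2 ^ (k₀ + 1) := pow_le_pow_right₀ one_le_two (by omega)
      have h2 : |ξ / 2 ^ (j + k₀ + 1)| ^ (2 * l + 2) ≤ π ^ (2 * l + 2) / 2 ^ (k₀ + 1) := by
        calc |ξ / 2 ^ (j + k₀ + 1)| ^ (2 * l + 2) ≤ (π / 2 ^ (k₀ + 1)) ^ (2 * l + 2) :=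
              pow_le_pow_left₀ (abs_nonneg _) h1 _
        _ = π ^ (2 * l + 2) / (2 ^ (k₀ + 1)) ^ (2 * l + 2) := div_pow _ _ _
        _ ≤ π ^ (2 * l + 2) / 2 ^ (k₀ + 1) := by
              apply div_le_div_of_nonneg_left (by positivity) (hb2 (k₀ + 1))
              exact le_self_pow₀ hone (by omega)
      have h3 : x ≤ C₁ * (π ^ (2 * l + 2) / 2 ^ (k₀ + 1)) := by
        rw [hxdef]; exact mul_le_mul_of_nonneg_left h2 hC₁nn
      have h4 : C₁ * (π ^ (2 * l + 2) / 2 ^ (k₀ + 1)) = (2 * C₁ * π ^ (2 * l + 2)) / 2 ^ (k₀ + 2) := by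
        rw [pow_succ, pow_succ]
        field_simp
        ring
      have h5 : (2 * C₁ * π ^ (2 * l + 2)) / 2 ^ (k₀ + 2) ≤ 2 ^ k₀ / 2 ^ (k₀ + 2) :=
        (div_le_div_iff_of_pos_right (hb2 (k₀ + 2))).2 h2k
      have h6 : (2:ℝ) ^ k₀ / 2 ^ (k₀ + 2) = 1 / 4 := by
        rw [pow_succ, pow_succ]
        field_simp
        ring
      rw [h4] at h3
      rw [h6] at h5
      calc x ≤ 1 / 4 := h3.trans h5
      _ ≤ 1 / 2 := by norm_num
    have hmge := mask_ge N l hN (ξ / 2 ^ (j + k₀ + 1))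
    rw [← hS₁def, ← hC₁def] at hmge
    calc Real.exp (-u j) = Real.exp (-(2 * x)) := by rw [hux]
    _ ≤ 1 - x := exp_neg_two_mul_le hx0 hxhalf
    _ ≤ f (j + k₀) := by
        rw [harg, hxdef] at *
        exact hmge
  have htail : Real.exp (-(∑' j, u j)) ≤ ∏' j, f (j + k₀) := tprod_ge_exp hMg hu hu0 hb
  have htsum : (∑' j, u j) = c * (1 - q)⁻¹ := by
    rw [hudef, tsum_mul_left, tsum_geometric_of_lt_one hq0 hq1]
  have hrpow : (2:ℝ) ^ (-(k₀ : ℝ) + 1) = 2 / 2 ^ k₀ := by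
    rw [Real.rpow_add two_pos, Real.rpow_one, Real.rpow_neg (by norm_num), Real.rpow_natCast]
    ring
  have hE : (∑' j, u j) ≤ C₁ * (2 / 2 ^ k₀) * |ξ₀| ^ (2 * l + 2) := by
    rw [htsum]
    have hq2 : (1 - q)⁻¹ ≤ 2 := by
      have h12 : (1:ℝ) / 2 ≤ 1 - q := by linarith
      have h := inv_anti₀ (by norm_num : (0:ℝ) < 1 / 2) h12
      simpa using h
    have hqk : q ^ (k₀ + 1) ≤ (1 / 4) * (1 / 2) ^ k₀ := by
      calc q ^ (k₀ + 1) ≤ (1 / 4 : ℝ) ^ (k₀ + 1) := pow_le_pow_left₀ hq0 hq4 _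
      _ = (1 / 4) * (1 / 4 : ℝ) ^ k₀ := by rw [pow_succ]; ring
      _ ≤ (1 / 4) * (1 / 2 : ℝ) ^ k₀ := by
            apply mul_le_mul_of_nonneg_left _ (by norm_num)
            exact pow_le_pow_left₀ (by norm_num) (by norm_num) k₀
    have hxx : |ξ| ^ (2 * l + 2) ≤ |ξ₀| ^ (2 * l + 2) :=
      pow_le_pow_left₀ (abs_nonneg _) hξle _
    have e1 : c * (1 - q)⁻¹ ≤ c * 2 := mul_le_mul_of_nonneg_left hq2 hcnn
    have e2 : c ≤ 2 * C₁ * |ξ₀| ^ (2 * l + 2) * ((1 / 4) * (1 / 2) ^ k₀) := by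
      rw [hcdef]
      apply mul_le_mul _ hqk (pow_nonneg hq0 _) (by positivity)
      exact mul_le_mul_of_nonneg_left hxx (by linarith)
    have e3 : c * 2 ≤ 2 * C₁ * |ξ₀| ^ (2 * l + 2) * ((1 / 4) * (1 / 2) ^ k₀) * 2 := by
      linarith
    have e4 : 2 * C₁ * |ξ₀| ^ (2 * l + 2) * ((1 / 4) * (1 / 2) ^ k₀) * 2
        = C₁ * ((1 / 2) ^ k₀) * |ξ₀| ^ (2 * l + 2) := by ring
    have e5 : C₁ * ((1 / 2 : ℝ) ^ k₀) * |ξ₀| ^ (2 * l + 2)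
        ≤ C₁ * (2 / 2 ^ k₀) * |ξ₀| ^ (2 * l + 2) := by
      have h7 : ((1 / 2 : ℝ)) ^ k₀ ≤ 2 / 2 ^ k₀ := by
        rw [div_pow, one_pow]
        exact (div_le_div_iff_of_pos_right (hb2 k₀)).2 one_le_two
      apply mul_le_mul_of_nonneg_right _ (pow_nonneg (abs_nonneg _) _)
      exact mul_le_mul_of_nonneg_left h7 hC₁nn
    calc c * (1 - q)⁻¹ ≤ c * 2 := e1
    _ ≤ 2 * C₁ * |ξ₀| ^ (2 * l + 2) * ((1 / 4) * (1 / 2) ^ k₀) * 2 := e3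
    _ = C₁ * ((1 / 2) ^ k₀) * |ξ₀| ^ (2 * l + 2) := e4
    _ ≤ C₁ * (2 / 2 ^ k₀) * |ξ₀| ^ (2 * l + 2) := e5
  -- assemble
  rw [ge_iff_le]
  refine le_trans ?_ (le_abs_self _)
  rw [show pseudoSplineFT N l ξ = ∏' j, f j from rfl, hsplit]
  have harg2 : -C₁ * (2:ℝ) ^ (-(k₀ : ℝ) + 1) * |ξ₀| ^ (2 * l + 2)
      = -(C₁ * (2 / 2 ^ k₀) * |ξ₀| ^ (2 * l + 2)) := by
    rw [hrpow]; ring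
  rw [harg2]
  apply mul_le_mul hhead _ (Real.exp_pos _).le (le_trans hheadnn hhead)
  calc Real.exp (-(C₁ * (2 / 2 ^ k₀) * |ξ₀| ^ (2 * l + 2)))
      ≤ Real.exp (-(∑' j, u j)) := Real.exp_le_exp.2 (by linarith)
  _ ≤ ∏' j, f (j + k₀) := htail
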